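/- Let n ≥ 5 be an odd integer, let N = 6·2^{n−4}, and let F ∈ ℚ[x₁,…,x_N] be a symmetric form of degree n. Since the power sums p₁,…,p_N are algebraically independent over ℚ, F is uniquely a polynomial in p₁,…,p_N; assume the coefficient of the monomial p_n in this representation is nonzero. Then for every rational number q there exist elements f₁,…,f_N of the field of rational functions ℚ(t₁,…,t_s) in s = 2n − 6 variables such that F(f₁,…,f_N) = q identically. -/

import Mathlib

set_option synthInstance.maxHeartbeats 1000000
set_option maxHeartbeats 1000000

noncomputable section WaringAux

open Polynomial

/-- Iterated symmetrized difference polynomial. -/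
def wpol (h : ℕ → ℚ) : ℕ → ℕ → Polynomial ℚ
  | 0, k => X ^ k
  | (m+1), k =>
      (wpol (fun i => h (i+1)) m k).comp (X + C (h 0)) -
      (wpol (fun i => h (i+1)) m k).comp (X - C (h 0))

lemma coeff_comp_X_add_C (Q : Polynomial ℚ) (a : ℚ) (i : ℕ) (hQ : Q.natDegree ≤ i) :
    (Q.comp (X + C a)).coeff i = Q.coeff i := by
  rw [← taylor_apply, taylor_coeff]
  have : hasseDeriv i Q = C (Q.coeff i) := by
    ext j
    rw [hasseDeriv_coeff]
    cases j with
    | zero => simp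
    | succ j' =>
        rw [coeff_C, if_neg (Nat.succ_ne_zero j')]
        rw [Q.coeff_eq_zero_of_natDegree_lt (by omega), mul_zero]
  rw [this, eval_C]

lemma coeff_comp_X_sub_C (Q : Polynomial ℚ) (a : ℚ) (i : ℕ) (hQ : Q.natDegree ≤ i) :
    (Q.comp (X - C a)).coeff i = Q.coeff i := by
  have := coeff_comp_X_add_C Q (-a) i hQ
  rwa [map_neg, ← sub_eq_add_neg] at this

lemma coeff_pred_comp_sub (Q : Polynomial ℚ) (a : ℚ) (d : ℕ) (hd : 1 ≤ d)
    (hQ : Q.natDegree ≤ d) :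
    (Q.comp (X + C a) - Q.comp (X - C a)).coeff (d-1) =
      2 * d * a * Q.coeff d := by
  have hH : hasseDeriv (d-1) Q = C (Q.coeff (d-1)) + C ((d : ℚ) * Q.coeff d) * X := by
    ext j
    rw [hasseDeriv_coeff]
    match j with
    | 0 => simp [Nat.sub_add_cancel hd]
    | 1 =>
        have h1 : 1 + (d-1) = d := by omega
        rw [h1]
        rw [Nat.choose_symm hd, Nat.choose_one_right]
        simp
    | (j+2) =>
        have : Q.coeff (j + 2 + (d-1)) = 0 :=
          Q.coeff_eq_zero_of_natDegree_lt (by omega)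
        rw [this, mul_zero]
        simp [coeff_X, coeff_C]
  have e1 : (Q.comp (X + C a)).coeff (d-1) = (hasseDeriv (d-1) Q).eval a := by
    rw [← taylor_apply, taylor_coeff]
  have e2 : (Q.comp (X - C a)).coeff (d-1) = (hasseDeriv (d-1) Q).eval (-a) := by
    rw [← taylor_coeff, taylor_apply, map_neg, ← sub_eq_add_neg]
  rw [coeff_sub, e1, e2, hH]
  simp
  ring

lemma wpol_natDegree_le (m : ℕ) : ∀ (h : ℕ → ℚ) (k : ℕ), (wpol h m k).natDegree ≤ k - m := by
  induction m with
  | zero => intro h k; simp [wpol, natDegree_X_pow]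
  | succ m ih =>
      intro h k
      rw [natDegree_le_iff_coeff_eq_zero]
      intro i hi
      have hQ : (wpol (fun i => h (i+1)) m k).natDegree ≤ i := le_trans (ih _ k) (by omega)
      rw [wpol, coeff_sub, coeff_comp_X_add_C _ _ _ hQ, coeff_comp_X_sub_C _ _ _ hQ, sub_self]

lemma wpol_eq_zero (m : ℕ) : ∀ (h : ℕ → ℚ) (k : ℕ), k < m → wpol h m k = 0 := by
  induction m with
  | zero => omega
  | succ m ih =>
      intro h k hk
      rcases Nat.lt_or_ge k m with hk' | hk'
      · rw [wpol, ih _ k hk', zero_comp, zero_comp, sub_self]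
      · have hkm : k = m := by omega
        have hdeg : (wpol (fun i => h (i+1)) m k).natDegree ≤ 0 := by
          have := wpol_natDegree_le m (fun i => h (i+1)) k
          omega
        obtain ⟨c, hc⟩ : ∃ c, wpol (fun i => h (i+1)) m k = C c :=
          ⟨_, Polynomial.eq_C_of_natDegree_le_zero hdeg⟩
        rw [wpol, hc, C_comp, C_comp, sub_self]

lemma wpol_comp_neg (m : ℕ) : ∀ (h : ℕ → ℚ) (k : ℕ),
    (wpol h m k).comp (-X) = (-1)^(k+m) * wpol h m k := by
  induction m with
  | zero =>
      intro h k
      rw [wpol, pow_comp, X_comp, Nat.add_zero, neg_pow]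
  | succ m ih =>
      intro h k
      set Q := wpol (fun i => h (i+1)) m k with hQ
      have key : ∀ a : ℚ, (Q.comp (X + C a)).comp (-X) = (-1)^(k+m) * Q.comp (X - C a) := by
        intro a
        rw [comp_assoc, add_comp, X_comp, C_comp]
        have : (-X + C a : Polynomial ℚ) = (-X).comp (X - C a) := by
          rw [neg_comp, X_comp]; ring
        rw [this, ← comp_assoc]
        have hneg : Q.comp (-X) = (-1)^(k+m) * Q := ih _ k
        rw [hneg, mul_comp]
        congr 1
        rw [← C_1, ← C_neg, ← C_pow, C_comp]
      have key2 : ∀ a : ℚ, (Q.comp (X - C a)).comp (-X) = (-1)^(k+m) * Q.comp (X + C a) := by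
        intro a
        have := key (-a)
        rw [map_neg, ← sub_eq_add_neg] at this
        rw [this, sub_neg_eq_add]
      rw [wpol, sub_comp, key, key2, ← hQ,
        show k + (m+1) = (k+m)+1 from rfl, pow_succ]
      ring

lemma wpol_coeff_top (m : ℕ) : ∀ (h : ℕ → ℚ) (k : ℕ), m ≤ k →
    (wpol h m k).coeff (k - m) =
      2^m * (∏ i ∈ Finset.range m, ((k:ℚ) - i)) * ∏ i ∈ Finset.range m, h i := by
  induction m with
  | zero => intro h k _; simp [wpol]
  | succ m ih =>
      intro h k hk
      have hd : 1 ≤ k - m := by omega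
      have hQ : (wpol (fun i => h (i+1)) m k).natDegree ≤ k - m := wpol_natDegree_le m _ k
      have h1 : k - (m+1) = (k - m) - 1 := by omega
      rw [wpol, h1, coeff_pred_comp_sub _ _ _ hd hQ, ih _ k (by omega)]
      have hcast : ((k - m : ℕ) : ℚ) = (k:ℚ) - m := by
        rw [Nat.cast_sub (by omega)]
      rw [hcast]
      rw [Finset.prod_range_succ, Finset.prod_range_succ' (fun i => h i) m]
      ring

lemma coeff_comp_neg_X (p : Polynomial ℚ) (i : ℕ) :
    (p.comp (-X)).coeff i = (-1)^i * p.coeff i := by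
  induction p using Polynomial.induction_on' with
  | add p q hp hq => rw [add_comp, coeff_add, hp, hq, coeff_add, mul_add]
  | monomial nn a =>
      rw [← C_mul_X_pow_eq_monomial, mul_comp, C_comp, pow_comp, X_comp, neg_pow]
      have : ((-1 : Polynomial ℚ))^nn = C ((-1 : ℚ)^nn) := by
        rw [map_pow, map_neg, map_one]
      rw [this, ← mul_assoc, mul_comm (C a) _, mul_assoc, coeff_C_mul, coeff_C_mul,
        coeff_X_pow]
      by_cases h : i = nn
      · subst h; simp
      · simp [h]

lemma wpol_coeff_even_eq_zero (h : ℕ → ℚ) (m k i : ℕ) (hodd : Odd (k + m)) (heven : Even i) :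
    (wpol h m k).coeff i = 0 := by
  have h1 : ((wpol h m k).comp (-X)).coeff i = ((-1 : Polynomial ℚ)^(k+m) * wpol h m k).coeff i := by
    rw [wpol_comp_neg]
  rw [coeff_comp_neg_X] at h1
  have h2 : ((-1 : Polynomial ℚ))^(k+m) = C ((-1 : ℚ)^(k+m)) := by
    rw [map_pow, map_neg, map_one]
  rw [h2, coeff_C_mul] at h1
  rw [heven.neg_one_pow, hodd.neg_one_pow] at h1
  linarith

lemma eval_wpol_d1 (h : ℕ → ℚ) (m : ℕ) (γ : ℚ) :
    (wpol h m (m+1)).eval γ = (wpol h m (m+1)).coeff 1 * γ := by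
  have hdeg : (wpol h m (m+1)).natDegree < 2 := by
    have := wpol_natDegree_le m h (m+1)
    omega
  rw [Polynomial.eval_eq_sum_range' hdeg]
  rw [Finset.sum_range_succ, Finset.sum_range_one]
  rw [wpol_coeff_even_eq_zero h m (m+1) 0 ⟨m, by ring⟩ Even.zero]
  simp

lemma eval_wpol_d3 (h : ℕ → ℚ) (m : ℕ) (γ : ℚ) :
    (wpol h m (m+3)).eval γ =
      (wpol h m (m+3)).coeff 3 * γ^3 + (wpol h m (m+3)).coeff 1 * γ := by
  have hdeg : (wpol h m (m+3)).natDegree < 4 := by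
    have := wpol_natDegree_le m h (m+3)
    omega
  rw [Polynomial.eval_eq_sum_range' hdeg]
  rw [Finset.sum_range_succ, Finset.sum_range_succ, Finset.sum_range_succ,
    Finset.sum_range_one]
  rw [wpol_coeff_even_eq_zero h m (m+3) 0 ⟨m+1, by ring⟩ Even.zero,
    wpol_coeff_even_eq_zero h m (m+3) 2 ⟨m+1, by ring⟩ (by decide)]
  simp
  ring

def gelem (h : ℕ → ℚ) : (m : ℕ) → ℚ → (Fin m → Bool) → ℚ
  | 0, γ, _ => γ
  | (m+1), γ, ε =>
      if ε 0 then -(gelem (fun i => h (i+1)) m (γ - h 0) (Fin.tail ε))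
      else gelem (fun i => h (i+1)) m (γ + h 0) (Fin.tail ε)

lemma sum_gelem_pow (m : ℕ) : ∀ (h : ℕ → ℚ) (k : ℕ), Odd k → ∀ γ : ℚ,
    ∑ ε : Fin m → Bool, (gelem h m γ ε)^k = (wpol h m k).eval γ := by
  induction m with
  | zero =>
      intro h k _ γ
      simp [gelem, wpol]
  | succ m ih =>
      intro h k hk γ
      rw [← Equiv.sum_comp (Fin.consEquiv (fun _ => Bool)) (fun ε => (gelem h (m+1) γ ε)^k)]
      rw [Fintype.sum_prod_type]
      rw [Fintype.sum_bool]
      have htrue : ∀ ε' : Fin m → Bool,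
          gelem h (m+1) γ ((Fin.consEquiv (fun _ => Bool)) (true, ε')) =
            -(gelem (fun i => h (i+1)) m (γ - h 0) ε') := by
        intro ε'
        simp [gelem, Fin.consEquiv, Fin.cons_zero, Fin.tail_cons]
      have hfalse : ∀ ε' : Fin m → Bool,
          gelem h (m+1) γ ((Fin.consEquiv (fun _ => Bool)) (false, ε')) =
            gelem (fun i => h (i+1)) m (γ + h 0) ε' := by
        intro ε'
        simp [gelem, Fin.consEquiv, Fin.cons_zero, Fin.tail_cons]
      simp only [htrue, hfalse]
      simp only [hk.neg_pow]
      rw [Finset.sum_neg_distrib]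
      rw [ih _ k hk, ih _ k hk]
      rw [wpol, eval_sub, eval_comp, eval_comp]
      simp [eval_add, eval_sub, eval_X, eval_C]
      ring

end WaringAux

open MvPolynomial

noncomputable section WaringMv

abbrev pfunW (N : ℕ) : Fin N → MvPolynomial (Fin N) ℚ :=
  fun k => ∑ i : Fin N, X i ^ ((k : ℕ) + 1)

abbrev wfunW (N : ℕ) : Fin N → ℕ := fun k => (k : ℕ) + 1

variable {N : ℕ}

lemma psum_mem_rangeW (k : ℕ) (hk1 : 1 ≤ k) (hkN : k ≤ N) :
    psum (Fin N) ℚ k ∈ (aeval (pfunW N) : MvPolynomial (Fin N) ℚ →ₐ[ℚ] _).range := by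
  rw [AlgHom.mem_range]
  refine ⟨X ⟨k - 1, by omega⟩, ?_⟩
  rw [aeval_X]
  have h1 : ((⟨k - 1, by omega⟩ : Fin N) : ℕ) + 1 = k := by simp; omega
  simp only [pfunW]
  rw [psum, h1]

lemma esymm_mem_rangeW (k : ℕ) (hkN : k ≤ N) :
    esymm (Fin N) ℚ k ∈ (aeval (pfunW N) : MvPolynomial (Fin N) ℚ →ₐ[ℚ] _).range := by
  induction k using Nat.strong_induction_on with
  | _ k ih =>
    rcases Nat.eq_zero_or_pos k with rfl | hk
    · rw [esymm_zero]; exact one_mem _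
    · set T := (aeval (pfunW N) : MvPolynomial (Fin N) ℚ →ₐ[ℚ] _).range with hT
      have hmul : (k : MvPolynomial (Fin N) ℚ) * esymm (Fin N) ℚ k ∈ T := by
        rw [mul_esymm_eq_sum]
        refine mul_mem (pow_mem (neg_mem (one_mem T)) _) (sum_mem ?_)
        intro a ha
        rw [Finset.mem_filter, Finset.HasAntidiagonal.mem_antidiagonal] at ha
        refine mul_mem (mul_mem (pow_mem (neg_mem (one_mem T)) _) ?_) ?_
        · exact ih a.1 (by omega) (by omega)
        · exact psum_mem_rangeW a.2 (by omega) (by omega)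
      have heq : esymm (Fin N) ℚ k
          = ((k : ℚ)⁻¹) • ((k : MvPolynomial (Fin N) ℚ) * esymm (Fin N) ℚ k) := by
        have hc : (k : MvPolynomial (Fin N) ℚ) = C ((k : ℕ) : ℚ) := by simp
        have hk0 : ((k : ℕ) : ℚ) ≠ 0 := Nat.cast_ne_zero.mpr (by omega)
        rw [hc, smul_eq_C_mul, ← mul_assoc, ← C_mul, inv_mul_cancel₀ hk0]
        simp
      rw [heq]
      exact Subalgebra.smul_mem T hmul _

lemma symm_mem_rangeW (F : MvPolynomial (Fin N) ℚ) (hsym : F.IsSymmetric) :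
    ∃ Φ₀ : MvPolynomial (Fin N) ℚ, aeval (pfunW N) Φ₀ = F := by
  obtain ⟨Ψ, hΨ⟩ := esymmAlgHom_surjective (σ := Fin N) ℚ (n := N)
    (by simp) ⟨F, hsym⟩
  have hF : aeval (fun i : Fin N => esymm (Fin N) ℚ ((i : ℕ) + 1)) Ψ = F := by
    have := congrArg Subtype.val hΨ
    rwa [esymmAlgHom_apply] at this
  have hmem : ∀ Ψ' : MvPolynomial (Fin N) ℚ,
      aeval (fun i : Fin N => esymm (Fin N) ℚ ((i : ℕ) + 1)) Ψ'
      ∈ (aeval (pfunW N) : MvPolynomial (Fin N) ℚ →ₐ[ℚ] _).range := by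
    intro Ψ'
    induction Ψ' using MvPolynomial.induction_on with
    | C r => rw [aeval_C]; exact Subalgebra.algebraMap_mem _ r
    | add p1 q1 hp hq => rw [map_add]; exact add_mem hp hq
    | mul_X p1 i hp =>
        rw [map_mul, aeval_X]
        exact mul_mem hp (esymm_mem_rangeW ((i : ℕ) + 1) (by omega))
  rw [← hF]
  exact hmem Ψ

lemma pfun_isHomogeneousW (k : Fin N) : (pfunW N k).IsHomogeneous ((k : ℕ) + 1) :=
  IsHomogeneous.sum _ _ _ (fun i _ => by
    simpa using (isHomogeneous_X ℚ i).pow ((k : ℕ) + 1))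

lemma aeval_pfun_isHomogeneousW (d : ℕ) (Ψ : MvPolynomial (Fin N) ℚ)
    (hΨ : Ψ.IsWeightedHomogeneous (wfunW N) d) :
    (aeval (pfunW N) Ψ).IsHomogeneous d := by
  rw [aeval_def, eval₂_eq]
  apply IsHomogeneous.sum
  intro mm hmm
  have hw : Finsupp.weight (wfunW N) mm = d :=
    hΨ (mem_support_iff.mp hmm)
  have : d = 0 + ∑ i ∈ mm.support, (((i : ℕ) + 1) * mm i) := by
    rw [zero_add, ← hw, Finsupp.weight_apply, Finsupp.sum]
    congr 1
    ext i
    simp [wfunW, smul_eq_mul, mul_comm]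
  rw [this]
  apply IsHomogeneous.mul
  · exact isHomogeneous_C _ _
  · exact IsHomogeneous.prod _ _ _
      (fun i _ => (pfun_isHomogeneousW i).pow (mm i))

lemma aeval_wcompW (F : MvPolynomial (Fin N) ℚ) (n : ℕ)
    (hhom : F.IsHomogeneous n)
    (Φ₀ : MvPolynomial (Fin N) ℚ) (hΦ₀ : aeval (pfunW N) Φ₀ = F) :
    aeval (pfunW N) (weightedHomogeneousComponent (wfunW N) n Φ₀) = F := by
  classical
  set D : Finset ℕ := insert n (Φ₀.support.image (fun mm => Finsupp.weight (wfunW N) mm))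
    with hD
  have hdecomp : Φ₀ = ∑ d ∈ D, weightedHomogeneousComponent (wfunW N) d Φ₀ := by
    ext mm
    rw [coeff_sum]
    simp only [coeff_weightedHomogeneousComponent]
    rw [Finset.sum_ite_eq D (Finsupp.weight (wfunW N) mm) (fun _ => coeff mm Φ₀)]
    by_cases hmm : coeff mm Φ₀ = 0
    · rw [hmm]; simp
    · rw [if_pos]
      refine Finset.mem_insert_of_mem ?_
      exact Finset.mem_image_of_mem _ (mem_support_iff.mpr hmm)
  have hFsum : F = ∑ d ∈ D, aeval (pfunW N) (weightedHomogeneousComponent (wfunW N) d Φ₀) := by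
    rw [← hΦ₀]
    conv_lhs => rw [hdecomp]
    rw [map_sum]
  have hproj : ∀ d ∈ D,
      homogeneousComponent n (aeval (pfunW N) (weightedHomogeneousComponent (wfunW N) d Φ₀)) =
        if n = d then aeval (pfunW N) (weightedHomogeneousComponent (wfunW N) d Φ₀) else 0 := by
    intro d _
    exact homogeneousComponent_of_mem ((mem_homogeneousSubmodule _ _).mpr
      (aeval_pfun_isHomogeneousW d _ (weightedHomogeneousComponent_isWeightedHomogeneous d Φ₀)))
  have hFproj : homogeneousComponent n F = F := by
    have := homogeneousComponent_of_mem ((mem_homogeneousSubmodule _ _).mpr hhom) (m := n)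
    rwa [if_pos rfl] at this
  calc aeval (pfunW N) (weightedHomogeneousComponent (wfunW N) n Φ₀)
      = ∑ d ∈ D, if n = d then aeval (pfunW N) (weightedHomogeneousComponent (wfunW N) d Φ₀)
          else 0 := by
        rw [Finset.sum_ite_eq D n (fun d => aeval (pfunW N)
          (weightedHomogeneousComponent (wfunW N) d Φ₀)), if_pos (Finset.mem_insert_self n _)]
    _ = ∑ d ∈ D, homogeneousComponent n
          (aeval (pfunW N) (weightedHomogeneousComponent (wfunW N) d Φ₀)) := by
        exact (Finset.sum_congr rfl hproj).symm
    _ = homogeneousComponent n F := by rw [hFsum, map_sum]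
    _ = F := hFproj

end WaringMv

/-- Waring-type result: let `n ≥ 5` be odd, `N = 6·2^{n−4}`, and let `F` be a symmetric form
of degree `n` in `N` variables whose (unique) representation as a polynomial in the power sums
`p₁, …, p_N` has nonzero coefficient at the monomial `p_n`.  Then for every rational `q` the
equation `F = q` has a solution in the rational function field `ℚ(t₁, …, t_{2n−6})`. -/
theorem symmetric_odd_form_waring_type
    (n : ℕ) (hn : 5 ≤ n) (hodd : Odd n)
    (N : ℕ) (hN : N = 6 * 2 ^ (n - 4))
    (F : MvPolynomial (Fin N) ℚ)
    (hsym : F.IsSymmetric) (hhom : F.IsHomogeneous n)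
    (hcoeff : ∀ Φ : MvPolynomial (Fin N) ℚ,
      aeval (fun k : Fin N => ∑ i : Fin N, X i ^ ((k : ℕ) + 1)) Φ = F →
      ∀ j : Fin N, (j : ℕ) + 1 = n → MvPolynomial.coeff (Finsupp.single j 1) Φ ≠ 0)
    (q : ℚ) :
    ∃ f : Fin N → FractionRing (MvPolynomial (Fin (2 * n - 6)) ℚ),
      aeval f F = algebraMap ℚ (FractionRing (MvPolynomial (Fin (2 * n - 6)) ℚ)) q := by
  classical
  -- basic size facts
  have hpow : n - 4 < 2 ^ (n - 4) := Nat.lt_two_pow_self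
  have h6 : 6 * (n - 3) ≤ 6 * 2 ^ (n - 4) := Nat.mul_le_mul_left 6 (by omega)
  have hnN : n < N := by omega
  -- the representation in power sums
  obtain ⟨Φ₀, hΦ₀⟩ := symm_mem_rangeW F hsym
  set Φ : MvPolynomial (Fin N) ℚ := weightedHomogeneousComponent (wfunW N) n Φ₀ with hΦdef
  have haevalΦ : aeval (pfunW N) Φ = F := aeval_wcompW F n hhom Φ₀ hΦ₀
  set j : Fin N := ⟨n - 1, by omega⟩ with hjdef
  have hj1 : (j : ℕ) + 1 = n := by simp [hjdef]; omega
  have hc : MvPolynomial.coeff (Finsupp.single j 1) Φ ≠ 0 := hcoeff Φ haevalΦ j hj1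
  set c : ℚ := MvPolynomial.coeff (Finsupp.single j 1) Φ with hcdef
  -- the rational point construction
  set D0 : ℚ := ∏ i ∈ Finset.range (n-3), ((n:ℚ) - i) with hD0def
  have hD0 : D0 ≠ 0 := by
    rw [hD0def]
    refine Finset.prod_ne_zero_iff.mpr ?_
    intro i hi
    rw [Finset.mem_range] at hi
    have h1 : (i : ℚ) < (n : ℚ) := by exact_mod_cast (by omega : i < n)
    intro h; rw [sub_eq_zero] at h; exact absurd h (by linarith)
  set A : ℚ := 2^(n-3) * D0 with hAdef
  have hA : A ≠ 0 := mul_ne_zero (pow_ne_zero _ two_ne_zero) hD0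
  set v : ℚ := q / c with hvdef
  set t : ℚ := -v / (6 * A) with htdef
  set H : ℕ → ℚ := fun i => if i = 0 then t else 1 with hHdef
  have hProdH : ∏ i ∈ Finset.range (n-3), H i = t := by
    rw [Finset.prod_eq_single_of_mem 0 (Finset.mem_range.mpr (by omega))
      (fun b _ hb => by simp [hHdef, hb])]
    simp [hHdef]
  have hc3 : (wpol H (n-3) n).coeff 3 = A * t := by
    have h3 : n - (n-3) = 3 := by omega
    have h := wpol_coeff_top (n-3) H n (by omega)
    rw [h3] at h
    rw [h, hProdH, hAdef]
  -- index equivalence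
  have hcard : Fintype.card (Fin N) = Fintype.card (Fin 3 × (Fin (n-3) → Bool)) := by
    rw [Fintype.card_prod, Fintype.card_fun, Fintype.card_fin, Fintype.card_bool,
      Fintype.card_fin, Fintype.card_fin]
    have h34 : n - 3 = (n - 4) + 1 := by omega
    rw [hN, h34, pow_succ]
    ring
  set e : Fin N ≃ (Fin 3 × (Fin (n-3) → Bool)) := Fintype.equivOfCardEq hcard with hedef
  set Γ : Fin 3 → ℚ := ![1, 1, -2] with hΓdef
  set r : Fin N → ℚ := fun i => gelem H (n-3) (Γ (e i).1) ((e i).2) with hrdef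
  have hsumr : ∀ k : ℕ, Odd k →
      ∑ i : Fin N, r i ^ k = ∑ j' : Fin 3, (wpol H (n-3) k).eval (Γ j') := by
    intro k hk
    have h1 : ∑ i : Fin N, r i ^ k
        = ∑ x : Fin 3 × (Fin (n-3) → Bool), (gelem H (n-3) (Γ x.1) x.2) ^ k :=
      Equiv.sum_comp e (fun x => (gelem H (n-3) (Γ x.1) x.2) ^ k)
    rw [h1, Fintype.sum_prod_type]
    exact Finset.sum_congr rfl (fun j' _ => sum_gelem_pow (n-3) H k hk (Γ j'))
  have hΓ0 : Γ 0 = 1 := rfl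
  have hΓ1 : Γ 1 = 1 := rfl
  have hΓ2 : Γ 2 = -2 := rfl
  have hSzero : ∀ k : ℕ, Odd k → k < n → ∑ i : Fin N, r i ^ k = 0 := by
    intro k hk hkn
    rw [hsumr k hk]
    rcases Nat.lt_or_ge k (n-3) with hlt | hge
    · rw [wpol_eq_zero (n-3) H k hlt]
      simp
    · have hk2 : k = (n-3) + 1 := by
        obtain ⟨a, ha⟩ := hk
        obtain ⟨b, hb⟩ := hodd
        omega
      subst hk2
      rw [Fin.sum_univ_three, eval_wpol_d1, eval_wpol_d1, eval_wpol_d1, hΓ0, hΓ1, hΓ2]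
      ring
  have hSn : ∑ i : Fin N, r i ^ n = v := by
    rw [hsumr n hodd]
    have hev : ∀ γ : ℚ, (wpol H (n-3) n).eval γ
        = (A * t) * γ^3 + (wpol H (n-3) n).coeff 1 * γ := by
      intro γ
      have h33 : (n-3) + 3 = n := by omega
      have h := eval_wpol_d3 H (n-3) γ
      rw [h33] at h
      rw [h, hc3]
    rw [Fin.sum_univ_three, hev, hev, hev, hΓ0, hΓ1, hΓ2]
    have : A * t * 1 ^ 3 + (wpol H (n-3) n).coeff 1 * 1
        + (A * t * 1 ^ 3 + (wpol H (n-3) n).coeff 1 * 1)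
        + (A * t * (-2) ^ 3 + (wpol H (n-3) n).coeff 1 * (-2)) = -6 * (A * t) := by ring
    rw [this, htdef]
    field_simp
  -- evaluate F at r
  set S : Fin N → ℚ := fun k => ∑ i : Fin N, r i ^ ((k : ℕ) + 1) with hSdef
  have hevalF : eval r F = eval S Φ := by
    rw [← haevalΦ]
    have key : ∀ Ψ : MvPolynomial (Fin N) ℚ, eval r (aeval (pfunW N) Ψ) = eval S Ψ := by
      intro Ψ
      induction Ψ using MvPolynomial.induction_on with
      | C a => simp
      | add p1 q1 hp hq => rw [map_add, map_add, hp, hq, map_add]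
      | mul_X p1 i hp =>
          have h1 : eval r (aeval (pfunW N) (p1 * X i))
              = eval r (aeval (pfunW N) p1) * eval r (pfunW N i) := by
            rw [map_mul, aeval_X, map_mul]
          rw [h1, hp, map_mul, eval_X]
          congr 1
          simp only [pfunW, map_sum, map_pow, eval_X, hSdef]
    exact key Φ
  have hwh : Φ.IsWeightedHomogeneous (wfunW N) n :=
    weightedHomogeneousComponent_isWeightedHomogeneous n Φ₀
  have hevalSΦ : eval S Φ = c * v := by
    rw [eval_eq]
    have hmemj : Finsupp.single j 1 ∈ Φ.support := mem_support_iff.mpr hc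
    have hz : ∀ mm ∈ Φ.support, mm ≠ Finsupp.single j 1 →
        MvPolynomial.coeff mm Φ * ∏ i ∈ mm.support, S i ^ mm i = 0 := by
      intro mm hmm hne
      have hw : Finsupp.weight (wfunW N) mm = n := hwh (mem_support_iff.mp hmm)
      have hw' : ∑ i ∈ mm.support, mm i * ((i : ℕ) + 1) = n := by
        rw [← hw, Finsupp.weight_apply, Finsupp.sum]
        rfl
      have hmmj : mm j = 0 := by
        by_contra hmj
        apply hne
        have hmono : mm j * ((j : ℕ) + 1) ≤ n := by
          rw [← hw']
          exact Finset.single_le_sum (f := fun i => mm i * ((i : ℕ) + 1))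
            (fun i _ => Nat.zero_le _) (Finsupp.mem_support_iff.mpr hmj)
        simp only [hj1] at hmono
        have hmj1 : mm j = 1 := by
          have h1 : mm j * n ≤ 1 * n := by omega
          have := Nat.le_of_mul_le_mul_right h1 (by omega : 0 < n)
          omega
        have hsplit := Finset.add_sum_erase _ (fun i => mm i * ((i : ℕ) + 1))
          (Finsupp.mem_support_iff.mpr hmj)
        rw [hw'] at hsplit
        simp only [hj1, hmj1, one_mul] at hsplit
        have hrest : ∑ i ∈ mm.support.erase j, mm i * ((i : ℕ) + 1) = 0 := by omega
        ext i
        rcases eq_or_ne i j with rfl | hij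
        · rw [hmj1, Finsupp.single_eq_same]
        · rw [Finsupp.single_eq_of_ne hij]
          by_contra hi0
          have himem : i ∈ mm.support.erase j :=
            Finset.mem_erase.mpr ⟨hij, Finsupp.mem_support_iff.mpr hi0⟩
          have hle := Finset.single_le_sum
            (f := fun i => mm i * ((i : ℕ) + 1)) (fun _ _ => Nat.zero_le _) himem
          have hrest' : ∑ x ∈ mm.support.erase j, mm x * ((x : ℕ) + 1) = 0 := hrest
          rw [hrest'] at hle
          have h0 := Nat.le_zero.mp hle
          rcases Nat.mul_eq_zero.mp h0 with h | h
          · exact hi0 h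
          · omega
      have hex : ∃ k₀ ∈ mm.support, Odd (mm k₀ * ((k₀ : ℕ) + 1)) := by
        by_contra hall
        push_neg at hall
        simp only [Nat.not_odd_iff_even] at hall
        have : Even (∑ i ∈ mm.support, mm i * ((i : ℕ) + 1)) := Finset.even_sum _ hall
        rw [hw'] at this
        exact (Nat.not_even_iff_odd.mpr hodd) this
      obtain ⟨k₀, hk₀mem, hk₀odd⟩ := hex
      rw [Nat.odd_mul] at hk₀odd
      have hk₀ne : mm k₀ ≠ 0 := by
        intro h0
        rw [h0] at hk₀odd
        exact (Nat.not_odd_iff_even.mpr Even.zero) hk₀odd.1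
      have hk₀j : k₀ ≠ j := by
        intro h
        rw [h] at hk₀ne
        exact hk₀ne hmmj
      have hk₀lt : (k₀ : ℕ) + 1 < n := by
        have hle : mm k₀ * ((k₀ : ℕ) + 1) ≤ n := by
          rw [← hw']
          exact Finset.single_le_sum (f := fun i => mm i * ((i : ℕ) + 1))
            (fun i _ => Nat.zero_le _) hk₀mem
        have h1 : (k₀ : ℕ) + 1 ≤ n := by
          have := Nat.le_mul_of_pos_left ((k₀ : ℕ) + 1) (by omega : 0 < mm k₀)
          omega
        rcases Nat.lt_or_ge ((k₀ : ℕ) + 1) n with h | h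
        · exact h
        · exfalso
          apply hk₀j
          apply Fin.ext
          simp only [hjdef]
          omega
      have hSk₀ : S k₀ = 0 := hSzero ((k₀ : ℕ) + 1) hk₀odd.2 hk₀lt
      refine mul_eq_zero_of_right _ (Finset.prod_eq_zero hk₀mem ?_)
      rw [hSk₀]
      exact zero_pow hk₀ne
    rw [Finset.sum_eq_single_of_mem _ hmemj hz]
    rw [Finsupp.support_single_ne_zero _ one_ne_zero, Finset.prod_singleton,
      Finsupp.single_eq_same, pow_one]
    have hSj : S j = v := by
      rw [hSdef]
      simp only
      rw [hj1]
      exact hSn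
    rw [hSj, ← hcdef]
  have hq : eval r F = q := by
    rw [hevalF, hevalSΦ, hvdef, mul_comm, div_mul_cancel₀ q hc]
  -- transfer to the fraction field
  set K := FractionRing (MvPolynomial (Fin (2 * n - 6)) ℚ) with hKdef
  refine ⟨fun i => algebraMap ℚ K (r i), ?_⟩
  have key : ∀ G : MvPolynomial (Fin N) ℚ,
      aeval (fun i => algebraMap ℚ K (r i)) G = algebraMap ℚ K (eval r G) := by
    intro G
    induction G using MvPolynomial.induction_on with
    | C a => simp
    | add p1 q1 hp hq => rw [map_add, hp, hq, map_add, map_add]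
    | mul_X p1 i hp =>
        have h1 : eval r (p1 * X i) = eval r p1 * r i := by rw [map_mul, eval_X]
        rw [map_mul, hp, aeval_X, h1, map_mul]
  rw [key F, hq]
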